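/- For every bounded linear operator T on a complex Hilbert space, w(T)² ≤ min over α ∈ [0,1] of ‖α|T|² + (1−α)|T*|²‖. -/

import Mathlib

variable {H : Type*} [NormedAddCommGroup H] [InnerProductSpace ℂ H] [CompleteSpace H]

/-- The numerical radius of a bounded linear operator. -/
noncomputable def numRad (T : H →L[ℂ] H) : ℝ :=
  sSup {r : ℝ | ∃ x : H, ‖x‖ = 1 ∧ r = ‖(inner ℂ (T x) x : ℂ)‖}

/-- The α-norm of a bounded linear operator. -/
noncomputable def alphaNorm (α : ℝ) (T : H →L[ℂ] H) : ℝ :=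
  sSup {r : ℝ | ∃ x : H, ‖x‖ = 1 ∧
    r = Real.sqrt (α * ‖(inner ℂ (T x) x : ℂ)‖^2 + (1 - α) * ‖T x‖^2)}

/-- `|T| = (T* T)^(1/2)`. -/
noncomputable def absOp (T : H →L[ℂ] H) : H →L[ℂ] H :=
  CFC.sqrt (ContinuousLinearMap.adjoint T * T)

/-- `|T*| = (T T*)^(1/2)`. -/
noncomputable def absAdj (T : H →L[ℂ] H) : H →L[ℂ] H :=
  CFC.sqrt (T * ContinuousLinearMap.adjoint T)

/-- The real part `(A + A*)/2`. -/
noncomputable def reOp (A : H →L[ℂ] H) : H →L[ℂ] H :=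
  (2:ℝ)⁻¹ • (A + ContinuousLinearMap.adjoint A)

/-- The imaginary part `(A - A*)/(2i)`. -/
noncomputable def imOp (A : H →L[ℂ] H) : H →L[ℂ] H :=
  ((2 * Complex.I)⁻¹ : ℂ) • (A - ContinuousLinearMap.adjoint A)



open ContinuousLinearMap in
lemma absOp_sq (T : H →L[ℂ] H) : absOp T ^ 2 = adjoint T * T := by
  rw [absOp, ← star_eq_adjoint]
  exact CFC.sq_sqrt (ha := star_mul_self_nonneg T)

open ContinuousLinearMap in
lemma absAdj_sq (T : H →L[ℂ] H) : absAdj T ^ 2 = T * adjoint T := by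
  rw [absAdj, ← star_eq_adjoint]
  exact CFC.sq_sqrt (ha := mul_star_self_nonneg T)

open ContinuousLinearMap in
lemma key_ineq (T : H →L[ℂ] H) {α : ℝ} (hα : α ∈ Set.Icc (0:ℝ) 1) {x : H} (hx : ‖x‖ = 1) :
    ‖(inner ℂ (T x) x : ℂ)‖^2 ≤
      ‖α • (absOp T ^ 2) + (1 - α) • (absAdj T ^ 2)‖ := by
  obtain ⟨hα0, hα1⟩ := hα
  set A : H →L[ℂ] H := α • (absOp T ^ 2) + (1 - α) • (absAdj T ^ 2) with hA
  have h1 : ‖(inner ℂ (T x) x : ℂ)‖ ≤ ‖T x‖ := by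
    calc ‖(inner ℂ (T x) x : ℂ)‖ = ‖(inner ℂ (T x) x : ℂ)‖ := rfl
    _ ≤ ‖T x‖ * ‖x‖ := norm_inner_le_norm _ _
    _ = ‖T x‖ := by rw [hx, mul_one]
  have h2 : ‖(inner ℂ (T x) x : ℂ)‖ ≤ ‖adjoint T x‖ := by
    have e : (inner ℂ (T x) x : ℂ) = inner ℂ x (adjoint T x) := by
      rw [adjoint_inner_right]
    calc ‖(inner ℂ (T x) x : ℂ)‖ = ‖(inner ℂ x (adjoint T x) : ℂ)‖ := by rw [e]
    _ ≤ ‖x‖ * ‖adjoint T x‖ := norm_inner_le_norm _ _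
    _ = ‖adjoint T x‖ := by rw [hx, one_mul]
  have habs : (0:ℝ) ≤ ‖(inner ℂ (T x) x : ℂ)‖ := norm_nonneg _
  have h3 : ‖(inner ℂ (T x) x : ℂ)‖^2 ≤ α * ‖T x‖^2 + (1 - α) * ‖adjoint T x‖^2 := by
    nlinarith [pow_le_pow_left₀ habs h1 2, pow_le_pow_left₀ habs h2 2]
  have h4 : α * ‖T x‖^2 + (1 - α) * ‖adjoint T x‖^2 = Complex.re (inner ℂ (A x) x : ℂ) := by
    have e1 : (inner ℂ ((absOp T ^ 2) x) x : ℂ) = inner ℂ (T x) (T x) := by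
      rw [absOp_sq, ContinuousLinearMap.mul_apply, adjoint_inner_left]
    have e2 : (inner ℂ ((absAdj T ^ 2) x) x : ℂ) = inner ℂ (adjoint T x) (adjoint T x) := by
      rw [absAdj_sq, ContinuousLinearMap.mul_apply, ← adjoint_inner_left, adjoint_adjoint]
    have e3 : (inner ℂ (A x) x : ℂ)
        = (α:ℂ) * inner ℂ (T x) (T x) + ((1:ℂ) - α) * inner ℂ (adjoint T x) (adjoint T x) := by
      rw [hA]
      simp only [ContinuousLinearMap.add_apply, ContinuousLinearMap.coe_smul', Pi.smul_apply,
        inner_add_left]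
      rw [← algebraMap_smul ℂ α ((absOp T ^ 2) x), ← algebraMap_smul ℂ (1-α) ((absAdj T ^ 2) x)]
      simp only [Complex.coe_algebraMap, inner_smul_left, Complex.conj_ofReal, e1, e2]
      push_cast
      ring
    rw [e3]
    simp [inner_self_eq_norm_sq_to_K, ← Complex.ofReal_pow]
  have h5 : Complex.re (inner ℂ (A x) x : ℂ) ≤ ‖A‖ := by
    calc Complex.re (inner ℂ (A x) x : ℂ) ≤ ‖(inner ℂ (A x) x : ℂ)‖ := Complex.re_le_norm _
    _ = ‖(inner ℂ (A x) x : ℂ)‖ := rfl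
    _ ≤ ‖A x‖ * ‖x‖ := norm_inner_le_norm _ _
    _ = ‖A x‖ := by rw [hx, mul_one]
    _ ≤ ‖A‖ * ‖x‖ := A.le_opNorm x
    _ = ‖A‖ := by rw [hx, mul_one]
  linarith

theorem numRad_sq_le_inf (T : H →L[ℂ] H) :
    (numRad T)^2 ≤
      sInf {r : ℝ | ∃ α ∈ Set.Icc (0:ℝ) 1,
        r = ‖α • (absOp T ^ 2) + (1 - α) • (absAdj T ^ 2)‖} := by
  apply le_csInf
  · exact ⟨_, 0, ⟨le_refl 0, zero_le_one⟩, rfl⟩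
  · rintro b ⟨α, hα, rfl⟩
    have h0 : 0 ≤ numRad T := by
      apply Real.sSup_nonneg
      rintro r ⟨x, hx, rfl⟩
      exact norm_nonneg _
    have hle : numRad T ≤ Real.sqrt ‖α • (absOp T ^ 2) + (1 - α) • (absAdj T ^ 2)‖ := by
      apply Real.sSup_le
      · rintro r ⟨x, hx, rfl⟩
        exact Real.le_sqrt_of_sq_le (key_ineq T hα hx)
      · exact Real.sqrt_nonneg _
    calc (numRad T)^2 ≤ (Real.sqrt ‖α • (absOp T ^ 2) + (1 - α) • (absAdj T ^ 2)‖)^2 :=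
          pow_le_pow_left₀ h0 hle 2
    _ = _ := Real.sq_sqrt (norm_nonneg _)
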